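/- For nonzero homogeneous polynomials g₁, …, g_s in ℝ[X₁,…,Xₙ], the norm of their product satisfies ‖g₁⋯g_s‖ ≤ ‖g₁‖⋯‖g_s‖, where ‖·‖ is the multinomial-scaled sup norm of coefficients. -/

import Mathlib

open MvPolynomial

/-- The multinomial-scaled sup norm: writing `f = ∑ binom(|α|,α) a_α X^α`,
`mnorm f = max_α |a_α|`, where `a_α = coeff α f / binom(|α|,α)`. -/
noncomputable def mnorm {n : ℕ} (f : MvPolynomial (Fin n) ℝ) : ℝ :=
  ⨆ α : Fin n →₀ ℕ, |coeff α f| / (Nat.multinomial Finset.univ α : ℝ)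

namespace MnormAux

variable {n : ℕ}

lemma mult_pos (α : Fin n →₀ ℕ) : (0 : ℝ) < (Nat.multinomial Finset.univ α : ℝ) := by
  exact_mod_cast Nat.multinomial_pos _ _

lemma degree_eq (α : Fin n →₀ ℕ) : α.degree = ∑ i, α i := by
  rw [Finsupp.degree]
  exact Finset.sum_subset (Finset.subset_univ _) (by
    intro i _ hi
    simpa using Finsupp.notMem_support_iff.mp hi)

lemma bddAbove (f : MvPolynomial (Fin n) ℝ) :
    BddAbove (Set.range fun α : Fin n →₀ ℕ => |coeff α f| / (Nat.multinomial Finset.univ α : ℝ)) := by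
  refine ⟨∑ β ∈ f.support, |coeff β f|, ?_⟩
  rintro x ⟨α, rfl⟩
  have h1 : |coeff α f| / (Nat.multinomial Finset.univ α : ℝ) ≤ |coeff α f| := by
    apply div_le_self (abs_nonneg _)
    exact_mod_cast Nat.succ_le_of_lt (Nat.multinomial_pos _ _)
  refine h1.trans ?_
  by_cases hα : coeff α f = 0
  · rw [hα, abs_zero]
    exact Finset.sum_nonneg fun _ _ => abs_nonneg _
  · exact Finset.single_le_sum (f := fun β => |coeff β f|) (fun _ _ => abs_nonneg _) (MvPolynomial.mem_support_iff.mpr hα)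

lemma mnorm_nonneg (f : MvPolynomial (Fin n) ℝ) : 0 ≤ mnorm f :=
  Real.iSup_nonneg fun α => div_nonneg (abs_nonneg _) (mult_pos α).le

lemma abs_coeff_le (f : MvPolynomial (Fin n) ℝ) (α : Fin n →₀ ℕ) :
    |coeff α f| ≤ mnorm f * (Nat.multinomial Finset.univ α : ℝ) := by
  have := le_ciSup (bddAbove f) α
  rw [div_le_iff₀ (mult_pos α)] at this
  exact this

lemma coeff_sum_X_pow (k : ℕ) (α : Fin n →₀ ℕ) :
    coeff α ((∑ i, X i : MvPolynomial (Fin n) ℝ) ^ k) =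
      if (∑ i, α i) = k then (Nat.multinomial Finset.univ α : ℝ) else 0 := by
  rw [Finset.sum_pow_eq_sum_piAntidiag, MvPolynomial.coeff_sum]
  have key : ∀ c : Fin n → ℕ, c ∈ Finset.piAntidiag Finset.univ k →
      coeff α ((Nat.multinomial Finset.univ c : MvPolynomial (Fin n) ℝ) * ∏ i, X i ^ c i) =
        if c = ⇑α then (Nat.multinomial Finset.univ c : ℝ) else 0 := by
    intro c _
    set β : Fin n →₀ ℕ := Finsupp.equivFunOnFinite.symm c with hβ
    have hc : c = ⇑β := rfl
    have hprod : (∏ i, X i ^ c i : MvPolynomial (Fin n) ℝ) = monomial β 1 := by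
      rw [← prod_X_pow_eq_monomial]
      refine (Finset.prod_subset (Finset.subset_univ _) ?_).symm
      intro i _ hi
      have : β i = 0 := Finsupp.notMem_support_iff.mp hi
      rw [hc]; rw [this]; rfl
    rw [hprod]
    have : ((Nat.multinomial Finset.univ c : MvPolynomial (Fin n) ℝ)) =
        C ((Nat.multinomial Finset.univ c : ℝ)) := (map_natCast (C : ℝ →+* MvPolynomial (Fin n) ℝ) _).symm
    rw [this, coeff_C_mul, coeff_monomial]
    have hiff : (β = α) ↔ (c = ⇑α) := by
      constructor
      · rintro rfl; rfl
      · intro h; exact DFunLike.coe_injective h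
    by_cases h : c = ⇑α
    · rw [if_pos (hiff.mpr h), if_pos h, mul_one]
    · rw [if_neg (fun hh => h (hiff.mp hh)), if_neg h, mul_zero]
  rw [Finset.sum_congr rfl key]
  rw [Finset.sum_ite_eq' (Finset.piAntidiag Finset.univ k) (⇑α) (fun c => (Nat.multinomial Finset.univ c : ℝ))]
  by_cases h : (∑ i, α i) = k
  · rw [if_pos, if_pos h]
    simp only [Finset.mem_piAntidiag]
    exact ⟨h, fun i _ => Finset.mem_univ i⟩
  · rw [if_neg, if_neg h]
    simp only [Finset.mem_piAntidiag]
    intro ⟨h1, _⟩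
    exact h h1

lemma vandermonde (p q : ℕ) (α : Fin n →₀ ℕ) (hα : (∑ i, α i) = p + q) :
    ∑ x ∈ Finset.HasAntidiagonal.antidiagonal α,
      (if (∑ i, x.1 i) = p then (Nat.multinomial Finset.univ x.1 : ℝ) else 0) *
      (if (∑ i, x.2 i) = q then (Nat.multinomial Finset.univ x.2 : ℝ) else 0) =
      (Nat.multinomial Finset.univ α : ℝ) := by
  have h := congrArg (coeff α) (pow_add (∑ i, X i : MvPolynomial (Fin n) ℝ) p q)
  rw [coeff_sum_X_pow, MvPolynomial.coeff_mul, if_pos hα] at h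
  rw [h]
  exact Finset.sum_congr rfl fun x _ => by rw [coeff_sum_X_pow, coeff_sum_X_pow]

lemma mnorm_mul_le {f g : MvPolynomial (Fin n) ℝ} {p q : ℕ}
    (hf : f.IsHomogeneous p) (hg : g.IsHomogeneous q) :
    mnorm (f * g) ≤ mnorm f * mnorm g := by
  have hMN : 0 ≤ mnorm f * mnorm g := mul_nonneg (mnorm_nonneg f) (mnorm_nonneg g)
  refine ciSup_le fun α => ?_
  rw [div_le_iff₀ (mult_pos α)]
  by_cases hα : (∑ i, α i) = p + q
  · calc |coeff α (f * g)| ≤ ∑ x ∈ Finset.HasAntidiagonal.antidiagonal α, |coeff x.1 f * coeff x.2 g| := by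
          rw [MvPolynomial.coeff_mul]; exact Finset.abs_sum_le_sum_abs _ _
      _ ≤ ∑ x ∈ Finset.HasAntidiagonal.antidiagonal α, (mnorm f * mnorm g) *
            ((if (∑ i, x.1 i) = p then (Nat.multinomial Finset.univ x.1 : ℝ) else 0) *
             (if (∑ i, x.2 i) = q then (Nat.multinomial Finset.univ x.2 : ℝ) else 0)) := by
          refine Finset.sum_le_sum fun x _ => ?_
          by_cases h1 : (∑ i, x.1 i) = p
          · by_cases h2 : (∑ i, x.2 i) = q
            · rw [if_pos h1, if_pos h2, abs_mul]
              calc |coeff x.1 f| * |coeff x.2 g|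
                  ≤ (mnorm f * (Nat.multinomial Finset.univ x.1 : ℝ)) *
                    (mnorm g * (Nat.multinomial Finset.univ x.2 : ℝ)) :=
                    mul_le_mul (abs_coeff_le f x.1) (abs_coeff_le g x.2) (abs_nonneg _)
                      (mul_nonneg (mnorm_nonneg f) (mult_pos x.1).le)
                _ = mnorm f * mnorm g * _ := by ring
            · have : coeff x.2 g = 0 := hg.coeff_eq_zero (by rw [degree_eq]; exact h2)
              rw [this, mul_zero, abs_zero, if_neg h2, mul_zero, mul_zero]
          · have : coeff x.1 f = 0 := hf.coeff_eq_zero (by rw [degree_eq]; exact h1)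
            rw [this, zero_mul, abs_zero, if_neg h1, zero_mul, mul_zero]
      _ = (mnorm f * mnorm g) * (Nat.multinomial Finset.univ α : ℝ) := by
          rw [← Finset.mul_sum, vandermonde p q α hα]
  · have hz : coeff α (f * g) = 0 := (hf.mul hg).coeff_eq_zero (by rw [degree_eq]; exact hα)
    rw [hz, abs_zero]
    exact mul_nonneg hMN (mult_pos α).le

lemma mnorm_one : mnorm (1 : MvPolynomial (Fin n) ℝ) ≤ 1 := by
  refine ciSup_le fun α => ?_
  rw [div_le_iff₀ (mult_pos α), MvPolynomial.coeff_one]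
  by_cases h : (0 : Fin n →₀ ℕ) = α
  · rw [if_pos h, abs_one, one_mul]
    exact_mod_cast Nat.succ_le_of_lt (Nat.multinomial_pos _ _)
  · rw [if_neg h, abs_zero]
    exact mul_nonneg zero_le_one (mult_pos α).le

end MnormAux

open MnormAux in
theorem stmt_7 {n s : ℕ} (g : Fin s → MvPolynomial (Fin n) ℝ) (d : Fin s → ℕ)
    (hg : ∀ i, g i ≠ 0) (hhom : ∀ i, (g i).IsHomogeneous (d i)) :
    mnorm (∏ i, g i) ≤ ∏ i, mnorm (g i) := by
  induction s with
  | zero => simpa using mnorm_one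
  | succ s ih =>
    rw [Fin.prod_univ_succ, Fin.prod_univ_succ (f := fun i => mnorm (g i))]
    have htail : (∏ i : Fin s, g i.succ).IsHomogeneous (∑ i : Fin s, d i.succ) :=
      MvPolynomial.IsHomogeneous.prod _ _ _ (fun i _ => hhom i.succ)
    calc mnorm (g 0 * ∏ i : Fin s, g i.succ)
        ≤ mnorm (g 0) * mnorm (∏ i : Fin s, g i.succ) := mnorm_mul_le (hhom 0) htail
      _ ≤ mnorm (g 0) * ∏ i : Fin s, mnorm (g i.succ) := by
          refine mul_le_mul_of_nonneg_left ?_ (mnorm_nonneg _)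
          exact ih (fun i => g i.succ) (fun i => d i.succ) (fun i => hg i.succ)
            (fun i => hhom i.succ)
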